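/- Define a map from involutions σ ∈ S_n to words μ ∈ {U,L,D}^n by μ_i = U if i < σ(i), μ_i = L if i = σ(i), μ_i = D if i > σ(i). Then μ is a Motzkin path: every prefix has at least as many U's as D's, and the total number of U's equals the total number of D's. -/

import Mathlib

open Finset

/-- Steps of a Motzkin path: up, level, down. -/
inductive Step | U | L | D
deriving DecidableEq

/-- Biane's word of an involution: `U` if `i < σ i`, `L` if `i = σ i`, `D` if `i > σ i`. -/
def bpath {n : ℕ} (σ : Equiv.Perm (Fin n)) (i : Fin n) : Step :=
  if i < σ i then Step.U else if σ i = i then Step.L else Step.D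

lemma bpath_U_iff {n : ℕ} (σ : Equiv.Perm (Fin n)) (i : Fin n) :
    bpath σ i = Step.U ↔ i < σ i := by
  unfold bpath
  by_cases h1 : i < σ i <;> by_cases h2 : σ i = i <;> simp [h1, h2]

lemma bpath_D_iff {n : ℕ} (σ : Equiv.Perm (Fin n)) (i : Fin n) :
    bpath σ i = Step.D ↔ σ i < i := by
  unfold bpath
  by_cases h1 : i < σ i <;> by_cases h2 : σ i = i <;> simp [h1, h2] <;> omega

/-- The word of an involution under Biane's map is a Motzkin path: each prefix has
at least as many `U`'s as `D`'s, and the total numbers of `U`'s and `D`'s agree. -/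
theorem bpath_isMotzkin {n : ℕ} (σ : Equiv.Perm (Fin n)) (hinv : ∀ i, σ (σ i) = i) :
    (∀ k : ℕ, (Finset.univ.filter
          (fun i : Fin n => (i : ℕ) < k ∧ bpath σ i = Step.D)).card
        ≤ (Finset.univ.filter
          (fun i : Fin n => (i : ℕ) < k ∧ bpath σ i = Step.U)).card)
    ∧ (Finset.univ.filter (fun i : Fin n => bpath σ i = Step.U)).card
      = (Finset.univ.filter (fun i : Fin n => bpath σ i = Step.D)).card := by
  constructor
  · intro k
    apply Finset.card_le_card_of_injOn (fun i => σ i)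
    · intro i hi
      simp only [Finset.mem_coe, Finset.mem_filter, Finset.mem_univ, true_and, bpath_D_iff, bpath_U_iff] at hi ⊢
      obtain ⟨hik, hd⟩ := hi
      refine ⟨?_, ?_⟩
      · exact lt_of_lt_of_le (Fin.lt_iff_val_lt_val.mp hd) (le_of_lt hik) |>.trans_le le_rfl
      · rw [hinv]; exact hd
    · intro a _ b _ hab
      exact σ.injective hab
  · apply Finset.card_bij (fun i _ => σ i)
    · intro i hi
      simp only [Finset.mem_filter, Finset.mem_univ, true_and, bpath_D_iff, bpath_U_iff] at hi ⊢
      rw [hinv]; exact hi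
    · intro a _ b _ hab
      exact σ.injective hab
    · intro b hb
      simp only [Finset.mem_filter, Finset.mem_univ, true_and, bpath_D_iff, bpath_U_iff] at hb ⊢
      exact ⟨σ b, by rw [hinv]; exact hb, hinv b⟩
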